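/- Let {a_n} be a non-decreasing sequence of positive odd integers such that limsup_{n→∞} a_n^{1/A^n} = ∞ for every positive integer A. Let K be a positive integer and f_1,…,f_K : ℕ → ℤ arbitrary functions. For k = 1,…,K set α_k = Σ_{n=1}^∞ (−1)^{f_k(n)} / (a_n · 2^{n^k}). Then α_1,…,α_K are algebraically independent over ℚ. -/

import Mathlib

open Finset

private lemma baseN_inj : ∀ (K N : ℕ) (g h : Fin K → ℕ), (∀ i, g i < N) → (∀ i, h i < N) →
    (∑ i, g i * N ^ (i : ℕ)) = (∑ i, h i * N ^ (i : ℕ)) → g = h := by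
  intro K
  induction K with
  | zero => intro N g h _ _ _; funext i; exact i.elim0
  | succ K ih =>
    intro N g h hg hh he
    rw [Fin.sum_univ_succ, Fin.sum_univ_succ] at he
    have h1 : ∀ u : Fin (K+1) → ℕ,
        (∑ i : Fin K, u i.succ * N ^ ((i.succ : Fin (K+1)) : ℕ)) = N * ∑ i : Fin K, u i.succ * N ^ (i : ℕ) := by
      intro u
      rw [Finset.mul_sum]
      refine Finset.sum_congr rfl fun i _ => ?_
      have : ((i.succ : Fin (K+1)) : ℕ) = (i : ℕ) + 1 := rfl
      rw [this, pow_succ]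
      ring
    rw [h1 g, h1 h] at he
    simp only [Fin.val_zero, pow_zero, mul_one] at he
    have hN : 0 < N := lt_of_le_of_lt (Nat.zero_le _) (hg 0)
    have h0 : g 0 = h 0 := by
      have := congrArg (· % N) he
      simpa [Nat.add_mul_mod_self_left, Nat.mod_eq_of_lt (hg 0), Nat.mod_eq_of_lt (hh 0)] using this
    have h2 : (∑ i : Fin K, g i.succ * N ^ (i : ℕ)) = ∑ i : Fin K, h i.succ * N ^ (i : ℕ) := by
      have := he
      rw [h0] at this
      have h3 : N * (∑ i : Fin K, g i.succ * N ^ (i : ℕ)) = N * ∑ i : Fin K, h i.succ * N ^ (i : ℕ) := by omega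
      exact Nat.eq_of_mul_eq_mul_left hN h3
    have := ih N (fun i => g i.succ) (fun i => h i.succ) (fun i => hg _) (fun i => hh _) h2
    funext i
    refine Fin.cases ?_ ?_ i
    · exact h0
    · intro j; exact congrFun this j

private lemma abs_pow_sub_pow (x y ε : ℝ) (hx : |x| ≤ 1) (hy : |y| ≤ 1) (hxy : |x - y| ≤ ε) :
    ∀ n : ℕ, |x ^ n - y ^ n| ≤ n * ε := by
  intro n
  induction n with
  | zero => simpa using le_trans (abs_nonneg _) hxy
  | succ n ihn =>
    have key : x ^ (n+1) - y ^ (n+1) = x * (x ^ n - y ^ n) + (x - y) * y ^ n := by ring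
    calc |x ^ (n+1) - y ^ (n+1)| ≤ |x| * |x ^ n - y ^ n| + |x - y| * |y ^ n| := by
          rw [key]; refine le_trans (abs_add_le _ _) ?_; rw [abs_mul, abs_mul]
      _ ≤ 1 * (n * ε) + ε * 1 := by
          refine add_le_add (mul_le_mul hx ihn (abs_nonneg _) zero_le_one) ?_
          refine mul_le_mul hxy ?_ (abs_nonneg _) (le_trans (abs_nonneg _) hxy)
          rw [abs_pow]; exact pow_le_one₀ (abs_nonneg _) hy
      _ = (n+1 : ℕ) * ε := by push_cast; ring

private lemma abs_prod_sub_prod {K : ℕ} (g h : Fin K → ℝ) (e : Fin K → ℕ) (ε : ℝ)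
    (hg : ∀ i, |g i| ≤ 1) (hh : ∀ i, |h i| ≤ 1) (hgh : ∀ i, |g i - h i| ≤ ε) :
    ∀ s : Finset (Fin K), |∏ i ∈ s, g i ^ e i - ∏ i ∈ s, h i ^ e i| ≤ (∑ i ∈ s, e i) * ε := by
  intro s
  induction s using Finset.induction_on with
  | empty => simp
  | @insert a s ha ihs =>
    rw [Finset.prod_insert ha, Finset.prod_insert ha, Finset.sum_insert ha]
    have hε : 0 ≤ ε := le_trans (abs_nonneg _) (hgh a)
    have hga : |g a ^ e a| ≤ 1 := by rw [abs_pow]; exact pow_le_one₀ (abs_nonneg _) (hg a)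
    have hhp : |∏ i ∈ s, h i ^ e i| ≤ 1 := by
      rw [abs_prod]
      refine Finset.prod_le_one (fun i _ => abs_nonneg _) (fun i _ => ?_)
      rw [abs_pow]; exact pow_le_one₀ (abs_nonneg _) (hh i)
    have key : g a ^ e a * ∏ i ∈ s, g i ^ e i - h a ^ e a * ∏ i ∈ s, h i ^ e i
        = g a ^ e a * (∏ i ∈ s, g i ^ e i - ∏ i ∈ s, h i ^ e i)
          + (g a ^ e a - h a ^ e a) * ∏ i ∈ s, h i ^ e i := by ring
    calc |g a ^ e a * ∏ i ∈ s, g i ^ e i - h a ^ e a * ∏ i ∈ s, h i ^ e i|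
        ≤ |g a ^ e a| * |∏ i ∈ s, g i ^ e i - ∏ i ∈ s, h i ^ e i|
          + |g a ^ e a - h a ^ e a| * |∏ i ∈ s, h i ^ e i| := by
          rw [key]; refine le_trans (abs_add_le _ _) ?_; rw [abs_mul, abs_mul]
      _ ≤ 1 * ((∑ i ∈ s, e i) * ε) + (e a * ε) * 1 := by
          refine add_le_add (mul_le_mul hga ihs (abs_nonneg _) zero_le_one) ?_
          exact mul_le_mul (abs_pow_sub_pow _ _ _ (hg a) (hh a) (hgh a) (e a)) hhp (abs_nonneg _)
            (by positivity)
      _ = ((e a + ∑ i ∈ s, e i : ℕ)) * ε := by push_cast; ring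
open Filter Finset

private lemma growth (a : ℕ → ℕ) (hpos : ∀ n, 1 ≤ n → 0 < a n)
    (hlimsup : ∀ A : ℕ, 0 < A → ∀ C : ℝ,
      ∃ᶠ n : ℕ in atTop, C < (a n : ℝ) ^ (((A : ℝ) ^ n)⁻¹))
    (KK B : ℕ) (C : ℝ) (N0 : ℕ) :
    ∃ N, N0 ≤ N ∧ C * ((∏ n ∈ Finset.range N, (a (n+1) : ℝ)) * 2 ^ N ^ KK) ^ B < a (N + 1) := by
  by_contra hcon
  push_neg at hcon
  set Pn : ℕ → ℕ := fun N => ∏ n ∈ Finset.range N, a (n+1) with hPn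
  have hcast : ∀ N, (∏ n ∈ Finset.range N, (a (n+1) : ℝ)) = (Pn N : ℝ) := by
    intro N; rw [hPn]; push_cast; ring
  have hPn1 : ∀ N, 1 ≤ Pn N := fun N => Finset.one_le_prod' fun n _ => hpos (n+1) (by omega)
  have haPn : ∀ N, 1 ≤ N → a N ≤ Pn N := by
    intro N hN
    have hmem : N - 1 ∈ Finset.range N := by simp; omega
    have := Finset.single_le_prod' (f := fun n => a (n+1)) (fun n _ => hpos (n+1) (by omega)) hmem
    simpa [Nat.sub_add_cancel hN] using this
  set P : ℕ → ℝ := fun N => (Pn N : ℝ) with hP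
  have hP1 : ∀ N, (1:ℝ) ≤ P N := fun N => by simp only [hP]; exact_mod_cast hPn1 N
  have hPsucc : ∀ N, P (N+1) = P N * a (N+1) := by
    intro N; rw [hP]; push_cast [hPn, Finset.prod_range_succ]; ring
  have haP : ∀ N, 1 ≤ N → (a N : ℝ) ≤ P N := fun N hN => by
    simp only [hP]; exact_mod_cast haPn N hN
  have hcon' : ∀ N, N0 ≤ N → (a (N+1) : ℝ) ≤ C * (P N * 2 ^ N ^ KK) ^ B := by
    intro N hN; have := hcon N hN; rwa [hcast] at this
  -- eventually n^KK ≤ 2^n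
  obtain ⟨N2, hN2⟩ : ∃ N2, ∀ n ≥ N2, n ^ KK ≤ 2 ^ n := by
    have h0 : Tendsto (fun n : ℕ => (n : ℝ) ^ KK * (2⁻¹ : ℝ) ^ n) atTop (nhds 0) :=
      tendsto_pow_const_mul_const_pow_of_abs_lt_one KK (by rw [abs_of_pos]; norm_num; norm_num)
    have h1 := (h0.eventually (eventually_le_nhds (by norm_num : (0:ℝ) < 1)))
    rw [eventually_atTop] at h1
    obtain ⟨N2, hN2⟩ := h1
    refine ⟨N2, fun n hn => ?_⟩
    have h2 := hN2 n hn
    have h3 : ((n : ℝ)) ^ KK ≤ 2 ^ n := by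
      have h4 : (0:ℝ) < 2 ^ n := by positivity
      rw [inv_pow] at h2
      calc ((n:ℝ)) ^ KK = (n:ℝ) ^ KK * ((2:ℝ)^n)⁻¹ * 2^n := by field_simp
        _ ≤ 1 * 2^n := mul_le_mul_of_nonneg_right h2 (le_of_lt h4)
        _ = 2^n := one_mul _
    exact_mod_cast h3
  set A : ℕ := 2*B+2 with hA
  set N1 : ℕ := max N0 (max N2 1) with hN1
  set M : ℝ := max (max C 2) (P N1) with hM
  have hM2 : (2:ℝ) ≤ M := le_trans (le_max_right _ _) (le_max_left _ _)
  have hMC : C ≤ M := le_trans (le_max_left _ _) (le_max_left _ _)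
  have hM1 : (1:ℝ) ≤ M := by linarith
  have hM0 : (0:ℝ) ≤ M := by linarith
  have hMP : P N1 ≤ M := le_max_right _ _
  have claim : ∀ n, P (N1 + n) ≤ M ^ (A ^ (N1 + n)) := by
    intro n
    induction n with
    | zero => simpa using le_trans hMP (le_self_pow₀ hM1 (by positivity))
    | succ n ihn =>
      have hm : N1 + n ≥ N1 := by omega
      set m := N1 + n with hmdef
      have hstep : P (m+1) ≤ P m * (C * (P m * 2 ^ m ^ KK) ^ B) := by
        rw [hPsucc]
        exact mul_le_mul_of_nonneg_left (hcon' m (le_trans (le_max_left _ _) hm))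
          (le_trans zero_le_one (hP1 m))
      have h2m : ((2:ℝ)) ^ (m ^ KK) ≤ M ^ (2 ^ m) :=
        calc ((2:ℝ)) ^ (m ^ KK) ≤ (2:ℝ) ^ (2 ^ m) :=
            pow_le_pow_right₀ (by norm_num) (hN2 m (le_trans (le_max_left _ _) (le_trans (le_max_right _ _) hm)))
          _ ≤ M ^ (2 ^ m) := pow_le_pow_left₀ (by norm_num) hM2 _
      have hCM : C ≤ M ^ 1 := by simpa using hMC
      have hPM : P m * 2 ^ m ^ KK ≤ M ^ (A ^ m + 2 ^ m) := by
        rw [pow_add]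
        exact mul_le_mul ihn h2m (by positivity) (by positivity)
      have hC0 : (0:ℝ) ≤ C := by
        by_contra hC0
        push_neg at hC0
        have h6 := hcon' N1 (le_max_left _ _)
        have h5 : (0:ℝ) < a (N1+1) := by exact_mod_cast hpos (N1+1) (by omega)
        nlinarith [pow_nonneg (mul_nonneg (le_trans zero_le_one (hP1 N1))
          (by positivity : (0:ℝ) ≤ (2:ℝ)^(N1 ^ KK))) B]
      have key : P (m+1) ≤ M ^ (A ^ m * (1 + B) + (1 + B * 2 ^ m)) := by
        calc P (m+1) ≤ P m * (C * (P m * 2 ^ m ^ KK) ^ B) := hstep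
          _ ≤ M ^ (A ^ m) * (M ^ 1 * (M ^ (A ^ m + 2 ^ m)) ^ B) := by
              refine mul_le_mul ihn (mul_le_mul hCM (pow_le_pow_left₀ ?_ hPM B) (by positivity) (by positivity))
                (mul_nonneg hC0 (by positivity)) (by positivity)
              positivity
          _ = M ^ (A ^ m + (1 + (A ^ m + 2 ^ m) * B)) := by
              rw [← pow_mul, ← pow_add, ← pow_add]
          _ = M ^ (A ^ m * (1 + B) + (1 + B * 2 ^ m)) := by ring_nf
      refine le_trans key (pow_le_pow_right₀ hM1 ?_)
      have h7 : 2 ^ m ≤ A ^ m := Nat.pow_le_pow_left (by omega) m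
      have h8 : 1 ≤ A ^ m := Nat.one_le_pow _ _ (by omega)
      have h9 : A ^ (m + 1) = A ^ m * A := pow_succ A m
      rw [show N1 + (n+1) = m + 1 by omega, h9]
      have h11 : A ^ m * (1 + B) + (1 + B * 2 ^ m) ≤ A ^ m * (1 + B) + (A ^ m + B * A ^ m) := by
        have h10 : B * 2 ^ m ≤ B * A ^ m := Nat.mul_le_mul_left B h7
        exact Nat.add_le_add_left (Nat.add_le_add h8 h10) _
      refine le_trans h11 (le_of_eq ?_)
      rw [hA]; ring
  -- contradiction with hlimsup
  have hev : ∀ᶠ n : ℕ in atTop, (a n : ℝ) ^ (((A : ℝ) ^ n)⁻¹) ≤ M := by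
    rw [eventually_atTop]
    refine ⟨N1 + 1, fun n hn => ?_⟩
    have h1 : (a n : ℝ) ≤ M ^ (A ^ n) := by
      have := claim (n - N1)
      rw [show N1 + (n - N1) = n by omega] at this
      exact le_trans (haP n (by omega)) this
    have hApos : (0:ℝ) < (A:ℝ) := by exact_mod_cast (by omega : 0 < A)
    have hinv : (0:ℝ) ≤ ((A : ℝ) ^ n)⁻¹ := by positivity
    calc (a n : ℝ) ^ (((A : ℝ) ^ n)⁻¹) ≤ (M ^ (A ^ n)) ^ (((A : ℝ) ^ n)⁻¹) :=
        Real.rpow_le_rpow (by positivity) h1 hinv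
      _ = M := by
        rw [← Real.rpow_natCast M (A ^ n), ← Real.rpow_mul hM0]
        rw [show ((A ^ n : ℕ) : ℝ) = (A:ℝ) ^ n by push_cast; ring]
        rw [mul_inv_cancel₀ (ne_of_gt (by positivity)), Real.rpow_one]
  have hfreq := hlimsup A (by omega) M
  obtain ⟨n, hn1, hn2⟩ := (hfreq.and_eventually hev).exists
  exact absurd hn2 (not_le.mpr hn1)

private def oInt (a : ℕ → ℕ) (s : ℕ → ℤ) (κ N : ℕ) : ℤ :=
  ∑ n ∈ Finset.range N, s n * (∏ m ∈ (Finset.range N).erase n, (a (m+1):ℤ)) * 2^(N^κ - (n+1)^κ)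

private lemma oInt_odd (a : ℕ → ℕ) (hodd : ∀ n, 1 ≤ n → Odd (a n)) (s : ℕ → ℤ)
    (hs : ∀ n, s n = 1 ∨ s n = -1) (κ N : ℕ) (hκ : 1 ≤ κ) (hN : 1 ≤ N) : Odd (oInt a s κ N) := by
  obtain ⟨M, rfl⟩ : ∃ M, N = M + 1 := ⟨N - 1, by omega⟩
  rw [oInt, Finset.sum_range_succ]
  have hlast : Odd (s M * (∏ m ∈ (Finset.range (M+1)).erase M, (a (m+1):ℤ)) * 2 ^ ((M+1)^κ - (M+1)^κ)) := by
    rw [Nat.sub_self, pow_zero, mul_one]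
    refine Odd.mul ?_ ?_
    · rcases hs M with h | h <;> simp [h]
    · refine Finset.prod_induction _ Odd (fun x y => Odd.mul) odd_one (fun m _ => ?_)
      exact_mod_cast hodd (m+1) (by omega)
  have hrest : Even (∑ n ∈ Finset.range M,
      s n * (∏ m ∈ (Finset.range (M+1)).erase n, (a (m+1):ℤ)) * 2 ^ ((M+1)^κ - (n+1)^κ)) := by
    rw [even_iff_two_dvd]
    refine Finset.dvd_sum fun n hn => ?_
    rw [Finset.mem_range] at hn
    have hlt : (n+1)^κ < (M+1)^κ := Nat.pow_lt_pow_left (by omega) (by omega)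
    have h1 : 1 ≤ (M+1)^κ - (n+1)^κ := by omega
    exact Dvd.dvd.mul_left (dvd_pow_self 2 (by omega)) _
  exact (hrest.add_odd hlast)

private lemma beta_mul_eq (a : ℕ → ℕ) (hpos : ∀ n, 1 ≤ n → 0 < a n) (s : ℕ → ℤ) (κ N : ℕ)
    (hκ : 1 ≤ κ) :
    (∑ n ∈ Finset.range N, (s n : ℝ) / ((a (n+1):ℝ) * 2^((n+1)^κ)))
      * ((∏ n ∈ Finset.range N, (a (n+1):ℝ)) * 2^(N^κ)) = (oInt a s κ N : ℝ) := by
  rw [oInt, Finset.sum_mul]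
  push_cast
  refine Finset.sum_congr rfl fun n hn => ?_
  have hn' := Finset.mem_range.mp hn
  have ha0 : (a (n+1):ℝ) ≠ 0 := by
    have := hpos (n+1) (by omega); positivity
  have hsplit : (∏ m ∈ Finset.range N, (a (m+1):ℝ))
      = (a (n+1):ℝ) * ∏ m ∈ (Finset.range N).erase n, (a (m+1):ℝ) :=
    (Finset.mul_prod_erase (Finset.range N) _ hn).symm
  have hexp : (n+1)^κ ≤ N^κ := Nat.pow_le_pow_left (by omega) κ
  have h2 : (2:ℝ)^(N^κ) = 2^((n+1)^κ) * 2^(N^κ - (n+1)^κ) := by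
    rw [← pow_add]
    congr 1
    omega
  rw [hsplit, h2]
  field_simp

private lemma term_abs_le (a : ℕ → ℕ) (hmono : Monotone a) (hpos : ∀ n, 1 ≤ n → 0 < a n)
    (z : ℤ) (κ n m : ℕ) (hκ : 1 ≤ κ) (hm : 1 ≤ m) (hmn : m ≤ n+1) :
    |((-1:ℝ)^z / ((a (n+1):ℝ) * 2 ^ ((n+1)^κ)))| ≤ ((a m:ℝ))⁻¹ * (2⁻¹)^(n+1) := by
  have h1 : |(-1:ℝ)^z| = 1 := by
    rcases Int.even_or_odd z with h | h
    · rw [Even.neg_one_zpow h]; simp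
    · rw [Odd.neg_one_zpow h]; simp
  have ham : (0:ℝ) < a m := by exact_mod_cast hpos m hm
  have han : (0:ℝ) < a (n+1) := by exact_mod_cast hpos (n+1) (by omega)
  have hmn' : (a m:ℝ) ≤ a (n+1) := by exact_mod_cast hmono hmn
  have hexp : n+1 ≤ (n+1)^κ := Nat.le_self_pow (by omega) _
  have h2 : ((2:ℝ))^(n+1) ≤ 2^((n+1)^κ) := pow_le_pow_right₀ one_le_two hexp
  rw [abs_div, h1, abs_mul, abs_of_pos han,
    abs_of_pos (by positivity : (0:ℝ) < (2:ℝ)^((n+1)^κ))]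
  have h3 : ((a m:ℝ))⁻¹ * (2⁻¹)^(n+1) = ((a m:ℝ) * 2^(n+1))⁻¹ := by rw [inv_pow, mul_inv]
  rw [h3, one_div]
  exact inv_anti₀ (by positivity) (mul_le_mul hmn' h2 (by positivity) (le_of_lt han))

open Filter

theorem stmt15 (a : ℕ → ℕ) (hmono : Monotone a)
    (hodd : ∀ n, 1 ≤ n → Odd (a n)) (hpos : ∀ n, 1 ≤ n → 0 < a n)
    (hlimsup : ∀ A : ℕ, 0 < A → ∀ C : ℝ,
      ∃ᶠ n : ℕ in atTop, C < (a n : ℝ) ^ (((A : ℝ) ^ n)⁻¹))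
    (K : ℕ) (hK : 0 < K) (f : Fin K → ℕ → ℤ) :
    AlgebraicIndependent ℚ (fun k : Fin K => ∑' n : ℕ,
      ((-1 : ℝ) ^ f k (n + 1)) / ((a (n + 1) : ℝ) * 2 ^ ((n + 1) ^ (k.val + 1)))) := by
  rw [algebraicIndependent_iff]
  intro p hp
  by_contra hp0
  set α : Fin K → ℝ := fun k : Fin K => ∑' n : ℕ,
      ((-1 : ℝ) ^ f k (n + 1)) / ((a (n + 1) : ℝ) * 2 ^ ((n + 1) ^ (k.val + 1))) with hαdef
  set T : Fin K → ℕ → ℝ := fun k n =>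
      ((-1 : ℝ) ^ f k (n + 1)) / ((a (n + 1) : ℝ) * 2 ^ ((n + 1) ^ (k.val + 1))) with hTdef
  have hαT : ∀ k, α k = ∑' n, T k n := fun k => rfl
  -- sign functions
  set sg : Fin K → ℕ → ℤ := fun k n => if Even (f k (n+1)) then 1 else -1 with hsgdef
  have hsg1 : ∀ k n, sg k n = 1 ∨ sg k n = -1 := by
    intro k n
    by_cases h : Even (f k (n+1)) <;> simp [hsgdef, h]
  have hsgT : ∀ k n, T k n = (sg k n : ℝ) / ((a (n + 1) : ℝ) * 2 ^ ((n + 1) ^ (k.val + 1))) := by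
    intro k n
    rcases Int.even_or_odd (f k (n+1)) with h | h
    · rw [hTdef, hsgdef]
      simp only [if_pos h, Even.neg_one_zpow h]
      norm_num
    · rw [hTdef, hsgdef]
      simp only [if_neg (by rwa [Int.not_even_iff_odd]), Odd.neg_one_zpow h]
      norm_num
  -- abs bounds on terms
  have habs : ∀ (k : Fin K) (n m : ℕ), 1 ≤ m → m ≤ n+1 →
      |T k n| ≤ ((a m:ℝ))⁻¹ * (2⁻¹)^(n+1) :=
    fun k n m hm hmn => term_abs_le a hmono hpos _ _ n m (by omega) hm hmn
  have ha1R : ∀ m, 1 ≤ m → (1:ℝ) ≤ (a m : ℝ) := fun m hm => by exact_mod_cast hpos m hm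
  have hinv1 : ∀ m, 1 ≤ m → ((a m:ℝ))⁻¹ ≤ 1 := by
    intro m hm
    rw [inv_le_one_iff₀]
    right; exact ha1R m hm
  have habs' : ∀ (k : Fin K) (n : ℕ), |T k n| ≤ (2⁻¹:ℝ)^(n+1) := by
    intro k n
    refine le_trans (habs k n 1 le_rfl (by omega)) ?_
    refine mul_le_of_le_one_left (by positivity) (hinv1 1 le_rfl)
  have hsumm : ∀ k, Summable (T k) := by
    intro k
    refine Summable.of_norm_bounded (g := fun n => (2⁻¹:ℝ)^n)
      (summable_geometric_of_lt_one (by norm_num) (by norm_num)) (fun n => ?_)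
    rw [Real.norm_eq_abs]
    refine le_trans (habs' k n) ?_
    exact pow_le_pow_of_le_one (by norm_num) (by norm_num) (by omega)
  have hgeom : ∀ N : ℕ, ∑' i : ℕ, ((2:ℝ)⁻¹)^(i+N+1) = (2⁻¹)^N := by
    intro N
    have h1 : ∀ i : ℕ, ((2:ℝ)⁻¹)^(i+N+1) = (2⁻¹)^i * (2⁻¹)^(N+1) := fun i => pow_add _ i (N+1)
    rw [tsum_congr h1, tsum_mul_right, tsum_geometric_of_lt_one (by norm_num) (by norm_num)]
    rw [pow_succ]
    norm_num
    ring
  have hsummg : Summable (fun i : ℕ => ((2:ℝ)⁻¹)^(i+1)) := by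
    refine Summable.of_norm_bounded (g := fun n => (2⁻¹:ℝ)^n)
      (summable_geometric_of_lt_one (by norm_num) (by norm_num)) (fun n => ?_)
    rw [Real.norm_eq_abs, abs_of_pos (by positivity)]
    exact pow_le_pow_of_le_one (by norm_num) (by norm_num) (by omega)
  -- tail bound
  have htail : ∀ (k : Fin K) (N : ℕ), |α k - ∑ n ∈ Finset.range N, T k n| ≤ ((a (N+1):ℝ))⁻¹ := by
    intro k N
    have h1 : α k - ∑ n ∈ Finset.range N, T k n = ∑' i, T k (i + N) := by
      rw [hαT k, ← Summable.sum_add_tsum_nat_add N (hsumm k)]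
      ring
    rw [h1]
    have hb : ∀ i : ℕ, |T k (i+N)| ≤ ((a (N+1):ℝ))⁻¹ * (2⁻¹)^(i+N+1) := by
      intro i
      exact habs k (i+N) (N+1) (by omega) (by omega)
    have hsb : Summable (fun i : ℕ => ((a (N+1):ℝ))⁻¹ * (2⁻¹)^(i+N+1)) := by
      refine Summable.mul_left _ ?_
      refine Summable.of_norm_bounded (g := fun n => (2⁻¹:ℝ)^n)
        (summable_geometric_of_lt_one (by norm_num) (by norm_num)) (fun n => ?_)
      rw [Real.norm_eq_abs, abs_of_pos (by positivity)]
      exact pow_le_pow_of_le_one (by norm_num) (by norm_num) (by omega)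
    calc |∑' i, T k (i + N)| ≤ ∑' i, |T k (i+N)| := by
          have hs2 : Summable fun i => ‖T k (i+N)‖ := by
            refine Summable.of_nonneg_of_le (fun i => norm_nonneg _) (fun i => ?_) hsb
            rw [Real.norm_eq_abs]; exact hb i
          have := norm_tsum_le_tsum_norm hs2
          simpa [Real.norm_eq_abs] using this
      _ ≤ ∑' i, ((a (N+1):ℝ))⁻¹ * (2⁻¹)^(i+N+1) := by
          refine Summable.tsum_le_tsum hb ?_ hsb
          refine Summable.of_nonneg_of_le (fun i => abs_nonneg _) hb hsb
      _ = ((a (N+1):ℝ))⁻¹ * (2⁻¹)^N := by rw [tsum_mul_left, hgeom N]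
      _ ≤ ((a (N+1):ℝ))⁻¹ * 1 := by
          refine mul_le_mul_of_nonneg_left ?_ (by positivity)
          exact pow_le_one₀ (by norm_num) (by norm_num)
      _ = ((a (N+1):ℝ))⁻¹ := mul_one _
  -- boundedness
  have hβle1 : ∀ (k : Fin K) (N : ℕ), |∑ n ∈ Finset.range N, T k n| ≤ 1 := by
    intro k N
    refine le_trans (Finset.abs_sum_le_sum_abs _ _) ?_
    calc ∑ n ∈ Finset.range N, |T k n| ≤ ∑ n ∈ Finset.range N, (2⁻¹:ℝ)^(n+1) :=
          Finset.sum_le_sum (fun n _ => habs' k n)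
      _ ≤ ∑' n : ℕ, (2⁻¹:ℝ)^(n+1) := by
          refine Summable.sum_le_tsum _ (fun n _ => by positivity) ?_
          exact hsummg
      _ = 1 := by
          have := hgeom 0
          simpa using this
  have hαle1 : ∀ k : Fin K, |α k| ≤ 1 := by
    intro k
    have h1 := htail k 0
    have h2 := hinv1 1 le_rfl
    simp only [Finset.range_zero, Finset.sum_empty, sub_zero] at h1
    calc |α k| ≤ (a 1 : ℝ)⁻¹ := by simpa using h1
      _ ≤ 1 := h2
  -- polynomial data
  set d : ℕ := p.totalDegree with hddef
  set q : ℕ := ∏ e ∈ p.support, (p.coeff e).den with hqdef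
  have hq1 : 1 ≤ q := Finset.one_le_prod' fun e _ => (p.coeff e).den_pos
  set cz : (Fin K →₀ ℕ) → ℤ := fun e => ((q:ℚ) * p.coeff e).num with hczdef
  have hczq : ∀ e ∈ p.support, ((q:ℚ) * p.coeff e) = (cz e : ℚ) := by
    intro e he
    have hdvd : (p.coeff e).den ∣ q := by
      rw [hqdef]
      exact Finset.dvd_prod_of_mem (fun e => (p.coeff e).den) he
    obtain ⟨t, ht⟩ := hdvd
    have hc : ((p.coeff e).den : ℚ) * p.coeff e = ((p.coeff e).num : ℚ) := by
      rw [mul_comm]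
      exact_mod_cast Rat.mul_den_eq_num _
    have h1 : ((q:ℚ) * p.coeff e) = (((t:ℤ) * (p.coeff e).num : ℤ) : ℚ) := by
      rw [ht]
      push_cast
      rw [mul_comm ((p.coeff e).den:ℚ) (t:ℚ), mul_assoc, hc]
    simp only [hczdef]
    rw [h1, Rat.num_intCast]
  have hcz0 : ∀ e ∈ p.support, cz e ≠ 0 := by
    intro e he h0
    have h1 := hczq e he
    rw [h0] at h1
    push_cast at h1
    rcases mul_eq_zero.mp h1 with h2 | h2
    · have : (q:ℚ) ≠ 0 := by positivity
      exact this h2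
    · exact (MvPolynomial.mem_support_iff.mp he) h2
  set V : ℕ := p.support.sup fun e => (cz e).natAbs with hVdef
  set Lip : ℝ := (∑ e ∈ p.support, |((p.coeff e : ℚ) : ℝ)|) * d with hLipdef
  have hLip0 : 0 ≤ Lip := by
    rw [hLipdef]
    refine mul_nonneg (Finset.sum_nonneg fun e _ => abs_nonneg _) (by positivity)
  -- choose N
  obtain ⟨N, hNge, hbig⟩ := growth a hpos hlimsup K d ((q:ℝ) * (Lip + 1))
    (max (max (d+1) (V+1)) 1)
  have hN1 : 1 ≤ N := le_trans (le_max_right _ _) hNge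
  have hNd : d < N := by
    have := le_trans (le_trans (le_max_left _ _) (le_max_left _ _)) hNge
    omega
  have hNV : V < N := by
    have := le_trans (le_trans (le_max_right _ _) (le_max_left _ _)) hNge
    omega
  set Pn : ℕ := ∏ n ∈ Finset.range N, a (n+1) with hPndef
  have hPn1 : 1 ≤ Pn := Finset.one_le_prod' fun n _ => hpos (n+1) (by omega)
  have hPnR : (0:ℝ) < (Pn:ℝ) := by exact_mod_cast hPn1
  have hPnodd : Odd (Pn:ℤ) := by
    have : Odd Pn := by
      rw [hPndef]
      refine Finset.prod_induction _ Odd (fun x y => Odd.mul) odd_one fun n _ => hodd (n+1) (by omega)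
    exact_mod_cast this
  set o : Fin K → ℤ := fun k => oInt a (sg k) (k.val+1) N with hodef
  have hoodd : ∀ k, Odd (o k) := fun k =>
    oInt_odd a hodd (sg k) (hsg1 k) (k.val+1) N (by omega) hN1
  set β : Fin K → ℝ := fun k => ∑ n ∈ Finset.range N, T k n with hβdef
  have hβo : ∀ k, β k = (o k : ℝ) / ((Pn:ℝ) * 2^(N^(k.val+1))) := by
    intro k
    have h2 := beta_mul_eq a hpos (sg k) (k.val+1) N (by omega)
    have hden : ((Pn:ℝ) * 2^(N^(k.val+1))) ≠ 0 := by positivity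
    simp only [hβdef]
    rw [eq_div_iff hden]
    have h3 : (∑ n ∈ Finset.range N, T k n) = ∑ n ∈ Finset.range N,
        (sg k n : ℝ) / ((a (n+1):ℝ) * 2^((n+1)^(k.val+1))) :=
      Finset.sum_congr rfl fun n _ => hsgT k n
    rw [h3]
    have h4 : ((Pn:ℝ)) = ∏ n ∈ Finset.range N, (a (n+1):ℝ) := by
      rw [hPndef]; push_cast; ring
    rw [h4]
    exact h2
  set S : (Fin K →₀ ℕ) → ℕ := fun e => ∑ i, e i * N^(i.val+1) with hSdef
  set J : (Fin K →₀ ℕ) → ℤ :=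
    fun e => (∏ i, (o i)^(e i)) * (Pn:ℤ)^(d - ∑ i, e i) * 2^(d*N^K - S e) with hJdef
  have hsumdeg : ∀ e ∈ p.support, (∑ i, e i) ≤ d := by
    intro e he
    have h1 := MvPolynomial.le_totalDegree he
    have h2 : (e.sum fun _ n => n) = ∑ i, e i := by
      rw [Finsupp.sum_fintype]
      intro i
      rfl
    rw [h2] at h1
    exact h1
  have hSle : ∀ e ∈ p.support, S e ≤ d * N^K := by
    intro e he
    have h1 : S e ≤ ∑ i, e i * N^K := by
      rw [hSdef]
      refine Finset.sum_le_sum fun i _ => ?_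
      exact Nat.mul_le_mul_left _ (Nat.pow_le_pow_right (by omega) i.isLt)
    calc S e ≤ ∑ i, e i * N^K := h1
      _ = (∑ i, e i) * N^K := (Finset.sum_mul _ _ _).symm
      _ ≤ d * N^K := Nat.mul_le_mul_right _ (hsumdeg e he)
  have hmonoid : ∀ e ∈ p.support,
      (∏ i, β i ^ e i) * ((Pn:ℝ)^d * 2^(d * N^K)) = (J e : ℝ) := by
    intro e he
    have hde : (∑ i, e i) ≤ d := hsumdeg e he
    have hSe : S e ≤ d * N^K := hSle e he
    have h1 : (∏ i, β i ^ e i) = (∏ i, (o i:ℝ)^(e i)) / ((Pn:ℝ)^(∑ i, e i) * 2^(S e)) := by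
      have h2 : ∀ i : Fin K, β i ^ e i
          = (o i:ℝ)^(e i) / ((Pn:ℝ)^(e i) * 2^(e i * N^(i.val+1))) := by
        intro i
        rw [hβo i, div_pow, mul_pow, ← pow_mul]
        ring_nf
      rw [Finset.prod_congr rfl fun i _ => h2 i, Finset.prod_div_distrib,
        Finset.prod_mul_distrib, Finset.prod_pow_eq_pow_sum, Finset.prod_pow_eq_pow_sum, hSdef]
    rw [h1, div_mul_eq_mul_div, div_eq_iff (by positivity : ((Pn:ℝ)^(∑ i, e i) * 2^(S e)) ≠ 0)]
    have h5 : ((Pn:ℝ))^d = (Pn:ℝ)^(∑ i, e i) * (Pn:ℝ)^(d - ∑ i, e i) := by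
      rw [← pow_add]
      congr 1
      omega
    have h6 : ((2:ℝ))^(d*N^K) = 2^(S e) * 2^(d*N^K - S e) := by
      rw [← pow_add]
      congr 1
      omega
    rw [h5, h6, hJdef]
    push_cast
    ring
  have hev : ∀ x : Fin K → ℝ, MvPolynomial.aeval x p
      = ∑ e ∈ p.support, ((p.coeff e : ℚ) : ℝ) * ∏ i, x i ^ e i := by
    intro x
    rw [MvPolynomial.aeval_def, MvPolynomial.eval₂_eq']
    simp [Algebra.smul_def]
  have hainv : (0:ℝ) < (a (N+1):ℝ) := by exact_mod_cast hpos (N+1) (by omega)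
  have hC : |MvPolynomial.aeval β p| ≤ Lip * ((a (N+1):ℝ))⁻¹ := by
    have h0 : MvPolynomial.aeval β p = MvPolynomial.aeval β p - MvPolynomial.aeval α p := by
      rw [hp]
      ring
    rw [h0, hev β, hev α, ← Finset.sum_sub_distrib]
    refine le_trans (Finset.abs_sum_le_sum_abs _ _) ?_
    have hterm : ∀ e ∈ p.support,
        |((p.coeff e:ℚ):ℝ) * ∏ i, β i ^ e i - ((p.coeff e:ℚ):ℝ) * ∏ i, α i ^ e i|
          ≤ |((p.coeff e:ℚ):ℝ)| * ((d:ℝ) * ((a (N+1):ℝ))⁻¹) := by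
      intro e he
      rw [← mul_sub, abs_mul]
      refine mul_le_mul_of_nonneg_left ?_ (abs_nonneg _)
      have h2 := abs_prod_sub_prod β α (fun i => e i) (((a (N+1):ℝ))⁻¹)
        (fun i => hβle1 i N) hαle1 (fun i => by
          rw [show β i - α i = -(α i - ∑ n ∈ Finset.range N, T i n) from by rw [hβdef]; ring,
            abs_neg]
          exact htail i N) Finset.univ
      refine le_trans h2 ?_
      refine mul_le_mul_of_nonneg_right ?_ (by positivity)
      exact_mod_cast hsumdeg e he
    refine le_trans (Finset.sum_le_sum hterm) ?_
    rw [← Finset.sum_mul, hLipdef]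
    rw [mul_assoc]
  set Z : ℤ := ∑ e ∈ p.support, cz e * J e with hZdef
  have hZeval : (Z:ℝ) = (q:ℝ) * (((Pn:ℝ))^d * 2^(d*N^K)) * MvPolynomial.aeval β p := by
    rw [hev β, Finset.mul_sum, hZdef]
    push_cast
    refine Finset.sum_congr rfl fun e he => ?_
    have h1 := hmonoid e he
    have h2 : ((cz e:ℚ):ℝ) = (q:ℝ) * ((p.coeff e:ℚ):ℝ) := by
      have h3 := (hczq e he).symm
      have h4 := congrArg (fun x : ℚ => (x : ℝ)) h3
      push_cast at h4 ⊢
      rw [← h4]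
    push_cast at h2
    rw [h2, ← h1]
    ring
  -- Z ≠ 0 via 2-adic valuation separation
  have hsupp_ne : p.support.Nonempty := MvPolynomial.support_nonempty.mpr hp0
  obtain ⟨e0, he0, hmax⟩ := p.support.exists_max_image S hsupp_ne
  have hTeS : ∀ ee : Fin K →₀ ℕ, S ee = N * ∑ i, ee i * N^(i.val) := by
    intro ee
    rw [hSdef, Finset.mul_sum]
    refine Finset.sum_congr rfl fun i _ => ?_
    rw [pow_succ]
    ring
  have hgap : ∀ e ∈ p.support, e ≠ e0 → S e + N ≤ S e0 := by
    intro e he hne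
    have h1 : S e ≤ S e0 := hmax e he
    have hlt : ∀ (ee : Fin K →₀ ℕ), ee ∈ p.support → ∀ i, ee i < N := by
      intro ee hee i
      have h2 : ee i ≤ ∑ j, ee j :=
        Finset.single_le_sum (fun j _ => Nat.zero_le _) (Finset.mem_univ i)
      have h3 := hsumdeg ee hee
      omega
    have h2 : S e ≠ S e0 := by
      intro hSe
      apply hne
      rw [hTeS, hTeS] at hSe
      have h4 := Nat.eq_of_mul_eq_mul_left (by omega : 0 < N) hSe
      have h5 := baseN_inj K N (fun i => e i) (fun i => e0 i)
        (hlt e he) (hlt e0 he0) h4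
      exact Finsupp.ext fun i => congrFun h5 i
    have hdvd : ∀ ee : Fin K →₀ ℕ, N ∣ S ee := fun ee => ⟨_, hTeS ee⟩
    have h6 : N ∣ S e0 - S e := Nat.dvd_sub (hdvd e0) (hdvd e)
    have h7 : N ≤ S e0 - S e := Nat.le_of_dvd (by omega) h6
    omega
  have hZne : Z ≠ 0 := by
    intro hZ0
    have hsplit : cz e0 * J e0 + ∑ e ∈ p.support.erase e0, cz e * J e = Z :=
      by rw [hZdef]; exact Finset.add_sum_erase _ (fun e => cz e * J e) he0
    have hdvd2 : ∀ e ∈ p.support.erase e0, (2:ℤ)^(d*N^K - S e0 + N) ∣ cz e * J e := by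
      intro e he
      obtain ⟨hne, hmem⟩ := Finset.mem_erase.mp he
      have h1 : d*N^K - S e0 + N ≤ d*N^K - S e := by
        have h2 := hgap e hmem hne
        have h3 := hSle e0 he0
        have h4 := hSle e hmem
        omega
      simp only [hJdef]
      calc (2:ℤ)^(d*N^K - S e0 + N) ∣ (2:ℤ)^(d*N^K - S e) := pow_dvd_pow 2 h1
        _ ∣ (∏ i, (o i)^(e i)) * (Pn:ℤ)^(d - ∑ i, e i) * 2^(d*N^K - S e) := dvd_mul_left _ _
        _ ∣ cz e * ((∏ i, (o i)^(e i)) * (Pn:ℤ)^(d - ∑ i, e i) * 2^(d*N^K - S e)) :=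
            dvd_mul_left _ _
    have hdvd3 : (2:ℤ)^(d*N^K - S e0 + N) ∣ cz e0 * J e0 := by
      have h1 : cz e0 * J e0 = -∑ e ∈ p.support.erase e0, cz e * J e := by
        rw [eq_neg_iff_add_eq_zero, hsplit, hZ0]
      rw [h1]
      exact dvd_neg.mpr (Finset.dvd_sum hdvd2)
    have hJ0 : J e0 = ((∏ i, (o i)^(e0 i)) * (Pn:ℤ)^(d - ∑ i, e0 i)) * 2^(d*N^K - S e0) := by
      rw [hJdef]
    rw [hJ0, ← mul_assoc, pow_add] at hdvd3
    have h2 : (2:ℤ)^N ∣ cz e0 * ((∏ i, (o i)^(e0 i)) * (Pn:ℤ)^(d - ∑ i, e0 i)) := by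
      have h3 : (2:ℤ)^(d*N^K - S e0) ≠ 0 := by positivity
      rw [mul_comm ((2:ℤ)^(d*N^K - S e0)) ((2:ℤ)^N)] at hdvd3
      exact (mul_dvd_mul_iff_right h3).mp hdvd3
    have hOodd : Odd ((∏ i, (o i)^(e0 i)) * (Pn:ℤ)^(d - ∑ i, e0 i)) := by
      refine Odd.mul ?_ (hPnodd.pow)
      exact Finset.prod_induction _ Odd (fun x y => Odd.mul) odd_one fun i _ => (hoodd i).pow
    have hcop : IsCoprime (2:ℤ) ((∏ i, (o i)^(e0 i)) * (Pn:ℤ)^(d - ∑ i, e0 i)) := by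
      rw [Int.prime_two.coprime_iff_not_dvd]
      intro hdd
      exact (Int.not_odd_iff_even.mpr (even_iff_two_dvd.mpr hdd)) hOodd
    have h3 : (2:ℤ)^N ∣ cz e0 := (hcop.pow_left).dvd_of_dvd_mul_right h2
    have h4 : (2^N : ℕ) ∣ (cz e0).natAbs := by
      have h5 := Int.natAbs_dvd_natAbs.mpr h3
      simpa [Int.natAbs_pow] using h5
    have h5 : 2^N ≤ (cz e0).natAbs := Nat.le_of_dvd (Int.natAbs_pos.mpr (hcz0 e0 he0)) h4
    have h6 : (cz e0).natAbs ≤ V := by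
      rw [hVdef]
      exact Finset.le_sup (f := fun e => (cz e).natAbs) he0
    have h7 : N < 2^N := Nat.lt_two_pow_self
    omega
  -- final contradiction
  have h1le : (1:ℝ) ≤ |(Z:ℝ)| := by exact_mod_cast Int.one_le_abs hZne
  have hXpos : (0:ℝ) < ((Pn:ℝ))^d * 2^(d*N^K) := by positivity
  have habsZ : |(Z:ℝ)| = (q:ℝ) * (((Pn:ℝ))^d * 2^(d*N^K)) * |MvPolynomial.aeval β p| := by
    rw [hZeval, abs_mul, abs_mul]
    rw [abs_of_nonneg (by positivity : (0:ℝ) ≤ (q:ℝ)),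
      abs_of_pos hXpos]
  have h9 : (1:ℝ) ≤ ((q:ℝ) * (((Pn:ℝ))^d * 2^(d*N^K)) * Lip) / (a (N+1):ℝ) := by
    rw [habsZ] at h1le
    calc (1:ℝ) ≤ (q:ℝ) * (((Pn:ℝ))^d * 2^(d*N^K)) * |MvPolynomial.aeval β p| := h1le
      _ ≤ (q:ℝ) * (((Pn:ℝ))^d * 2^(d*N^K)) * (Lip * ((a (N+1):ℝ))⁻¹) := by
          refine mul_le_mul_of_nonneg_left hC (by positivity)
      _ = ((q:ℝ) * (((Pn:ℝ))^d * 2^(d*N^K)) * Lip) / (a (N+1):ℝ) := by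
          rw [div_eq_mul_inv]
          ring
  rw [one_le_div hainv] at h9
  -- compare with hbig
  have hcastP : (∏ n ∈ Finset.range N, (a (n+1):ℝ)) = (Pn:ℝ) := by
    rw [hPndef]
    push_cast
    ring
  rw [hcastP] at hbig
  have h10 : ((Pn:ℝ) * 2^(N^K))^d = ((Pn:ℝ))^d * 2^(d*N^K) := by
    rw [mul_pow, ← pow_mul, Nat.mul_comm (N^K) d]
  rw [h10] at hbig
  have hq0 : (1:ℝ) ≤ (q:ℝ) := by exact_mod_cast hq1
  nlinarith [hbig, h9, hXpos, hLip0, hq0]
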